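/- arXiv:2104.10556 — 3 statements merged into one kernel-verified Lean document; each statement's English description precedes it below -/
import Mathlib

section
/- Let S be a lower stable discrete semigroup (with unit), and let 𝔅(S) be the Banach algebra generated by the left regular representation operators {L_s : s ∈ S} on ℓ²(S). Then every nonzero element L_f of 𝔅(S) has strictly positive spectral radius; consequently 𝔅(S) is semisimple. -/
set_option maxHeartbeats 1000000
set_option synthInstance.maxHeartbeats 400000

open scoped ENNReal NNReal

namespace LowerStableAux

open scoped Classical

/-- A general (noncommutative) ring fact: elements of the Jacobson radical are
quasi-regular. -/
theorem isUnit_mul_add_one_of_mem_jacobson_bot {A : Type*} [Ring A] {x : A}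
    (hx : x ∈ Ideal.jacobson (⊥ : Ideal A)) (y : A) : IsUnit (y * x + 1) := by
  obtain ⟨z, hz⟩ := Ideal.mem_jacobson_iff.1 hx y
  rw [Ideal.mem_bot] at hz
  have hz' : z * y * x + z = 1 := sub_eq_zero.1 hz
  have hz1 : z * (y * x + 1) = 1 := by rw [mul_add, mul_one, ← mul_assoc]; exact hz'
  have hzj : z * y * x ∈ Ideal.jacobson (⊥ : Ideal A) := Ideal.mul_mem_left _ _ hx
  obtain ⟨w, hw⟩ := Ideal.mem_jacobson_iff.1 hzj (-1)
  rw [Ideal.mem_bot] at hw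
  have hw' : w * (-1) * (z * y * x) + w = 1 := sub_eq_zero.1 hw
  have hw1 : w * z = 1 := by
    have hzz : z = 1 - z * y * x := by rw [← hz']; abel
    calc w * z = w * (1 - z * y * x) := by rw [← hzz]
      _ = w * (-1) * (z * y * x) + w := by noncomm_ring
      _ = 1 := hw'
  have hwv : y * x + 1 = w := by
    calc y * x + 1 = (w * z) * (y * x + 1) := by rw [hw1, one_mul]
      _ = w * (z * (y * x + 1)) := by rw [mul_assoc]
      _ = w := by rw [hz1, mul_one]
  exact ⟨⟨y * x + 1, z, by rw [hwv]; exact hw1, hz1⟩, rfl⟩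

theorem spectrum_subset_of_mem_jacobson_bot {A : Type*} [Ring A] [Algebra ℂ A] {x : A}
    (hx : x ∈ Ideal.jacobson (⊥ : Ideal A)) : spectrum ℂ x ⊆ {0} := by
  intro z hz
  by_contra hz0
  simp only [Set.mem_singleton_iff] at hz0
  apply spectrum.notMem_iff.2 ?_ hz
  have hu' : IsUnit (algebraMap ℂ A (-z⁻¹) * x + 1) :=
    isUnit_mul_add_one_of_mem_jacobson_bot hx _
  have hkey : (algebraMap ℂ A z) * ((algebraMap ℂ A (-z⁻¹)) * x + 1) =
      algebraMap ℂ A z - x := by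
    rw [mul_add, mul_one, ← mul_assoc, ← map_mul]
    have hzz : z * (-z⁻¹) = -1 := by field_simp
    rw [hzz, map_neg, map_one, neg_one_mul]
    abel
  have hzu : IsUnit (algebraMap ℂ A z) := (isUnit_iff_ne_zero.2 hz0).map (algebraMap ℂ A)
  have := hzu.mul hu'
  rwa [hkey] at this

variable {S : Type*} [Monoid S]

/-- The underlying function of the right translation operator. -/
noncomputable def Rfun (u : S) (f : S → ℂ) : S → ℂ :=
  fun s => if h : ∃ t, t * u = s then f h.choose else 0

theorem Rfun_apply_mul (hinj : ∀ u : S, Function.Injective fun t : S => t * u)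
    (u t : S) (f : S → ℂ) : Rfun u f (t * u) = f t := by
  have h : ∃ t', t' * u = t * u := ⟨t, rfl⟩
  rw [Rfun, dif_pos h]
  congr 1
  exact hinj u h.choose_spec

theorem Rfun_ne_zero {u s : S} {f : S → ℂ} (h : Rfun u f s ≠ 0) :
    ∃ t, t * u = s ∧ f t ≠ 0 := by
  rw [Rfun] at h
  split_ifs at h with hex
  · exact ⟨hex.choose, hex.choose_spec, h⟩
  · exact absurd rfl h

theorem Rfun_eq_zero {u s : S} (f : S → ℂ) (h : ¬ ∃ t, t * u = s) :
    Rfun u f s = 0 := by rw [Rfun, dif_neg h]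

theorem memℓp_Rfun (hinj : ∀ u : S, Function.Injective fun t : S => t * u)
    (u : S) (f : lp (fun _ : S => ℂ) 2) : Memℓp (Rfun u ⇑f) 2 := by
  apply memℓp_gen
  have hf : Summable fun t : S => ‖f t‖ ^ (2 : ℝ≥0∞).toReal :=
    (memℓp_gen_iff (by norm_num)).1 (lp.memℓp f)
  have hzero : ∀ s ∉ Set.range fun t : S => t * u,
      ‖Rfun u (⇑f) s‖ ^ (2 : ℝ≥0∞).toReal = 0 := by
    intro s hs
    have h0 : Rfun u (⇑f) s = 0 := Rfun_eq_zero _ (by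
      rintro ⟨t, ht⟩; exact hs ⟨t, ht⟩)
    rw [h0, norm_zero]
    rw [Real.zero_rpow (by norm_num)]
  refine ((hinj u).summable_iff hzero).mp ?_
  refine hf.congr fun t => ?_
  simp only [Function.comp_apply]
  rw [Rfun_apply_mul hinj]

theorem norm_R_mk (hinj : ∀ u : S, Function.Injective fun t : S => t * u)
    (u : S) (f : lp (fun _ : S => ℂ) 2) :
    ‖(⟨Rfun u ⇑f, memℓp_Rfun hinj u f⟩ : lp (fun _ : S => ℂ) 2)‖ = ‖f‖ := by
  have hp : 0 < (2 : ℝ≥0∞).toReal := by norm_num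
  refine Real.rpow_left_injOn hp.ne' (norm_nonneg _) (norm_nonneg f) ?_
  simp only
  rw [lp.norm_rpow_eq_tsum hp, lp.norm_rpow_eq_tsum hp]
  have hsupp : (Function.support fun s => ‖Rfun u (⇑f) s‖ ^ (2 : ℝ≥0∞).toReal) ⊆
      Set.range fun t : S => t * u := by
    intro s hs
    by_contra hc
    apply hs
    have h0 : Rfun u (⇑f) s = 0 := Rfun_eq_zero _ (by rintro ⟨t, ht⟩; exact hc ⟨t, ht⟩)
    rw [Function.mem_support] at *
    push_neg
    rw [h0, norm_zero, Real.zero_rpow (by norm_num)]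
  rw [← Function.Injective.tsum_eq (hinj u)
    (f := fun s => ‖Rfun u (⇑f) s‖ ^ (2 : ℝ≥0∞).toReal) hsupp]
  congr 1
  funext t
  rw [Rfun_apply_mul hinj]

/-- The right translation operators on `ℓ²(S)`. -/
noncomputable def R (hinj : ∀ u : S, Function.Injective fun t : S => t * u)
    (u : S) : lp (fun _ : S => ℂ) 2 →L[ℂ] lp (fun _ : S => ℂ) 2 :=
  LinearMap.mkContinuous
    { toFun := fun f => ⟨Rfun u ⇑f, memℓp_Rfun hinj u f⟩
      map_add' := fun f g => by
        apply lp.ext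
        funext s
        have hadd : ⇑(f + g) = ⇑f + ⇑g := lp.coeFn_add f g
        show Rfun u (⇑(f + g)) s = Rfun u (⇑f) s + Rfun u (⇑g) s
        rw [hadd]
        rw [Rfun, Rfun, Rfun]
        split_ifs with h
        · rfl
        · rw [add_zero]
      map_smul' := fun c f => by
        apply lp.ext
        funext s
        have hsmul : ⇑(c • f) = c • ⇑f := lp.coeFn_smul c f
        show Rfun u (⇑(c • f)) s = c • Rfun u (⇑f) s
        rw [hsmul]
        rw [Rfun, Rfun]
        split_ifs with h
        · rfl
        · rw [smul_zero] }
    1 (fun f => by rw [one_mul]; exact le_of_eq (norm_R_mk hinj u f))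

theorem R_apply (hinj : ∀ u : S, Function.Injective fun t : S => t * u)
    (u : S) (f : lp (fun _ : S => ℂ) 2) (s : S) :
    (R hinj u f) s = Rfun u (⇑f) s := rfl

theorem R_single [DecidableEq S] (hinj : ∀ u : S, Function.Injective fun t : S => t * u)
    (u t : S) : R hinj u (lp.single 2 t (1 : ℂ)) = lp.single 2 (t * u) 1 := by
  apply lp.ext
  funext s
  rw [R_apply hinj u (lp.single (E := fun _ : S => ℂ) 2 t 1) s]
  by_cases hs : ∃ w, w * u = s
  · obtain ⟨w, rfl⟩ := hs
    rw [Rfun_apply_mul hinj]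
    by_cases hw : w = t
    · subst hw
      rw [lp.single_apply_self, lp.single_apply_self]
    · rw [lp.single_apply_ne _ _ _ hw, lp.single_apply_ne]
      exact fun h => hw (hinj u h)
  · rw [Rfun_eq_zero _ hs]
    exact (lp.single_apply_ne (E := fun _ : S => ℂ) 2 (t * u) 1 fun h => hs ⟨t, h.symm⟩).symm

/-- Coordinate evaluation as a continuous linear functional on `ℓ²(S)`. -/
noncomputable def evalCLM (s : S) : lp (fun _ : S => ℂ) 2 →L[ℂ] ℂ :=
  LinearMap.mkContinuous
    { toFun := fun f => f s
      map_add' := fun f g => by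
        have hadd : ⇑(f + g) = ⇑f + ⇑g := lp.coeFn_add f g
        show (⇑(f + g)) s = (⇑f) s + (⇑g) s
        rw [hadd]; rfl
      map_smul' := fun c f => by
        have hsmul : ⇑(c • f) = c • ⇑f := lp.coeFn_smul c f
        show (⇑(c • f)) s = c • (⇑f) s
        rw [hsmul]; rfl }
    1 (fun f => by
      rw [one_mul]
      exact lp.norm_apply_le_norm (by norm_num) f s)

theorem evalCLM_apply (s : S) (f : lp (fun _ : S => ℂ) 2) :
    evalCLM s f = f s := rfl

end LowerStableAux

open LowerStableAux in
/-- Let `S` be a lower stable discrete semigroup (with unit): it carries a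
well-founded linear order such that products respect the order, with equality of
products only for equal factors.  Let `L s` be the left regular representation
isometries on `ℓ²(S)` (characterized by `L s δ_u = δ_{s u}`), and let `𝔅(S)` be
the Banach algebra they generate, i.e. the norm closure of the algebra generated
by `{L s}`.  Then every nonzero element of `𝔅(S)` has strictly positive spectral
radius; consequently `𝔅(S)` is semisimple (its Jacobson radical, the
intersection of all maximal ideals, is zero). -/
theorem lowerStable_positive_spectralRadius_and_semisimple
    (S : Type*) [Monoid S] [LinearOrder S] [WellFoundedLT S]
    (hmul : ∀ us vs : List S, List.Forall₂ (· ≤ ·) us vs →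
      us.prod ≤ vs.prod ∧ (us.prod = vs.prod ↔ us = vs))
    (L : S → (lp (fun _ : S => ℂ) 2 →L[ℂ] lp (fun _ : S => ℂ) 2))
    (hL : ∀ s u : S, L s (lp.single 2 u 1) = lp.single 2 (s * u) 1)
    (𝔅 : Subalgebra ℂ (lp (fun _ : S => ℂ) 2 →L[ℂ] lp (fun _ : S => ℂ) 2))
    (h𝔅 : 𝔅 = (Algebra.adjoin ℂ (Set.range L)).topologicalClosure) :
    (∀ T ∈ 𝔅, T ≠ 0 → 0 < spectralRadius ℂ T) ∧
      sInf {I : Ideal ↥𝔅 | I.IsMaximal} = ⊥ := by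
  classical
  -- two-factor version of the order compatibility
  have hmul2 : ∀ a b c d : S, a ≤ c → b ≤ d →
      a * b ≤ c * d ∧ (a * b = c * d ↔ a = c ∧ b = d) := by
    intro a b c d h1 h2
    have h := hmul [a, b] [c, d]
      (List.Forall₂.cons h1 (List.Forall₂.cons h2 List.Forall₂.nil))
    simpa using h
  -- right multiplication is injective
  have hinj : ∀ u : S, Function.Injective fun t : S => t * u := by
    intro u a b hab
    simp only at hab
    rcases le_total a b with h | h
    · exact ((hmul2 a u b u h le_rfl).2.mp hab).1
    · exact (((hmul2 b u a u h le_rfl).2.mp hab.symm).1).symm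
  set δ : S → lp (fun _ : S => ℂ) 2 := fun u => lp.single 2 u (1 : ℂ) with hδ
  set R : S → (lp (fun _ : S => ℂ) 2 →L[ℂ] lp (fun _ : S => ℂ) 2) :=
    LowerStableAux.R hinj with hR
  have hL' : ∀ s u : S, L s (δ u) = δ (s * u) := fun s u => hL s u
  have hRδ : ∀ u t : S, R u (δ t) = δ (t * u) := fun u t => R_single hinj u t
  have hRapp : ∀ (u : S) (g : lp (fun _ : S => ℂ) 2) (s : S),
      (R u g) s = Rfun u (⇑g) s := fun u g s => by
    simp only [hR]; rfl
  have hRmul : ∀ (u t : S) (g : lp (fun _ : S => ℂ) 2),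
      (R u g) (t * u) = g t := fun u t g => by
    rw [hRapp, Rfun_apply_mul hinj]
  have hRnz : ∀ {u s : S} {g : lp (fun _ : S => ℂ) 2}, (R u g) s ≠ 0 →
      ∃ t, t * u = s ∧ g t ≠ 0 := by
    intro u s g h
    rw [hRapp] at h
    exact Rfun_ne_zero h
  -- density of the span of the point masses
  have hdense : Dense ((Submodule.span ℂ (Set.range δ) :
      Submodule ℂ (lp (fun _ : S => ℂ) 2)) : Set (lp (fun _ : S => ℂ) 2)) := by
    intro f
    have hs := lp.hasSum_single (E := fun _ : S => ℂ) (p := 2) (by norm_num) f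
    refine mem_closure_of_tendsto hs (Filter.Eventually.of_forall fun t => ?_)
    refine Submodule.sum_mem _ fun i _ => ?_
    have hmk : lp.single 2 i (f i) = (f i) • δ i := by
      simp only [hδ]
      rw [← lp.single_smul]
      norm_num
    rw [hmk]
    exact Submodule.smul_mem _ _ (Submodule.subset_span ⟨i, rfl⟩)
  -- operators agreeing on point masses are equal
  have hext : ∀ T₁ T₂ : lp (fun _ : S => ℂ) 2 →L[ℂ] lp (fun _ : S => ℂ) 2,
      (∀ u, T₁ (δ u) = T₂ (δ u)) → T₁ = T₂ := by
    intro T₁ T₂ h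
    refine ContinuousLinearMap.ext_on hdense ?_
    rintro x ⟨u, rfl⟩
    exact h u
  -- everything in 𝔅 commutes with each right translation
  have hcomm : ∀ T ∈ 𝔅, ∀ u, R u * T = T * R u := by
    have hsub : 𝔅 ≤ Subalgebra.centralizer ℂ (Set.range R) := by
      rw [h𝔅]
      apply Subalgebra.topologicalClosure_minimal
      · rw [Algebra.adjoin_le_iff]
        rintro x ⟨s, rfl⟩
        rw [SetLike.mem_coe, Subalgebra.mem_centralizer_iff]
        rintro m ⟨u, rfl⟩
        apply hext
        intro t
        show R u (L s (δ t)) = L s (R u (δ t))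
        rw [hL', hRδ, hRδ, hL', mul_assoc]
      · have hcen : ((Subalgebra.centralizer ℂ (Set.range R) :
            Subalgebra ℂ (lp (fun _ : S => ℂ) 2 →L[ℂ] lp (fun _ : S => ℂ) 2)) :
            Set (lp (fun _ : S => ℂ) 2 →L[ℂ] lp (fun _ : S => ℂ) 2)) =
            ⋂ u : S, {T | R u * T = T * R u} := by
          ext T
          simp only [SetLike.mem_coe, Subalgebra.mem_centralizer_iff, Set.mem_iInter,
            Set.mem_setOf_eq]
          constructor
          · intro h u
            exact h (R u) ⟨u, rfl⟩
          · rintro h m ⟨u, rfl⟩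
            exact h u
        rw [hcen]
        exact isClosed_iInter fun u =>
          isClosed_eq (continuous_const.mul continuous_id) (continuous_id.mul continuous_const)
    intro T hT u
    exact (Subalgebra.mem_centralizer_iff ℂ).1 (hsub hT) (R u) ⟨u, rfl⟩
  -- the action of T on point masses is a right translate of T δ₁
  have hTδ : ∀ T ∈ 𝔅, ∀ u, T (δ u) = R u (T (δ 1)) := by
    intro T hT u
    have h1 : δ u = R u (δ 1) := by rw [hRδ, one_mul]
    rw [h1, ← ContinuousLinearMap.mul_apply T (R u), ← hcomm T hT u,
      ContinuousLinearMap.mul_apply]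
  -- T is determined by T δ₁
  have hker : ∀ T ∈ 𝔅, T (δ 1) = 0 → T = 0 := by
    intro T hT h0
    apply hext
    intro u
    rw [hTδ T hT u, h0, map_zero, ContinuousLinearMap.zero_apply]
  -- expansion of T g in terms of right translates of T δ₁
  have hexp : ∀ T ∈ 𝔅, ∀ g : lp (fun _ : S => ℂ) 2, ∀ s : S,
      HasSum (fun t => g t * (R t (T (δ 1))) s) ((T g) s) := by
    intro T hT g s
    have h1 : HasSum (fun t => lp.single 2 t (g t)) g :=
      lp.hasSum_single (by norm_num) g
    have h2 : HasSum (fun t => T (lp.single 2 t (g t))) (T g) := h1.mapL T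
    have h3 : HasSum (fun t => evalCLM s (T (lp.single 2 t (g t)))) ((T g) s) :=
      h2.mapL (evalCLM s)
    refine HasSum.congr_fun h3 fun t => ?_
    have hmk : lp.single 2 t (g t) = (g t) • δ t := by
      simp only [hδ]; rw [← lp.single_smul]; norm_num
    rw [evalCLM_apply, hmk, map_smul, hTδ T hT t]
    have := lp.coeFn_smul (g t) (R t (T (δ 1)))
    calc (⇑((g t) • R t (T (δ 1)))) s = ((g t) • ⇑(R t (T (δ 1)))) s := by rw [this]
      _ = g t * (R t (T (δ 1))) s := rfl
  -- PART 1: positive spectral radius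
  have hpos : ∀ T ∈ 𝔅, T ≠ 0 → 0 < spectralRadius ℂ T := by
    intro T hT hT0
    set f : lp (fun _ : S => ℂ) 2 := T (δ 1) with hf
    have hf0 : f ≠ 0 := fun h => hT0 (hker T hT h)
    have hsupp : {s : S | f s ≠ 0}.Nonempty := by
      by_contra hc
      rw [Set.not_nonempty_iff_eq_empty] at hc
      apply hf0
      apply lp.ext
      funext s
      have : f s = 0 := by
        by_contra h
        exact absurd (Set.mem_setOf_eq ▸ h : s ∈ {s : S | f s ≠ 0}) (hc ▸ Set.notMem_empty s)
      rw [this, lp.coeFn_zero, Pi.zero_apply]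
    set X : S := (wellFounded_lt (α := S)).min {s : S | f s ≠ 0} hsupp with hXdef
    have hXmem : f X ≠ 0 := (wellFounded_lt (α := S)).min_mem {s : S | f s ≠ 0} hsupp
    have hXmin : ∀ w : S, f w ≠ 0 → X ≤ w := fun w hw =>
      not_lt.1 ((wellFounded_lt (α := S)).not_lt_min {s : S | f s ≠ 0} hw)
    -- the key induction
    have key : ∀ n : ℕ, ((T ^ n) (δ 1)) (X ^ n) = (f X) ^ n ∧
        ∀ s, ((T ^ n) (δ 1)) s ≠ 0 → X ^ n ≤ s := by
      intro n
      induction n with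
      | zero =>
        rw [pow_zero, pow_zero, pow_zero, ContinuousLinearMap.one_apply]
        constructor
        · simp only [hδ]
          exact lp.single_apply_self (E := fun _ : S => ℂ) 2 (1 : S) (1 : ℂ)
        · intro s hs
          simp only [hδ] at hs
          have hs1 : s = 1 := by
            by_contra h1
            exact hs (lp.single_apply_ne (E := fun _ : S => ℂ) 2 1 1 h1)
          rw [hs1]
      | succ n ih =>
        obtain ⟨ih1, ih2⟩ := ih
        set g : lp (fun _ : S => ℂ) 2 := (T ^ n) (δ 1) with hg
        have hstep : (T ^ (n + 1)) (δ 1) = T g := by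
          rw [pow_succ', ContinuousLinearMap.mul_apply]
        have hsum := hexp T hT g
        have hzero : ∀ t : S, t ≠ X ^ n → g t * (R t f) (X ^ (n + 1)) = 0 := by
          intro t ht
          by_contra hne
          obtain ⟨hg0, hr0⟩ := mul_ne_zero_iff.1 hne
          have hXt : X ^ n ≤ t := ih2 t hg0
          obtain ⟨w, hw, hfw⟩ := hRnz hr0
          have hXw : X ≤ w := hXmin w hfw
          have heq : X * X ^ n = w * t := by rw [hw, pow_succ']
          exact ht ((hmul2 X (X ^ n) w t hXw hXt).2.mp heq).2.symm
        constructor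
        · have hval : (T g) (X ^ (n + 1)) = g (X ^ n) * (R (X ^ n) f) (X ^ (n + 1)) :=
            (hsum (X ^ (n + 1))).unique (hasSum_single (X ^ n) hzero)
          have hRv : (R (X ^ n) f) (X ^ (n + 1)) = f X := by
            rw [pow_succ' X n, hRmul]
          rw [hstep, hval, hRv, ih1, ← pow_succ]
        · intro s hs
          rw [hstep] at hs
          have hterm : ∃ t : S, g t * (R t f) s ≠ 0 := by
            by_contra hc
            push_neg at hc
            have hz : (T g) s = 0 :=
              (hsum s).unique (by
                have : (fun t : S => g t * (R t f) s) = fun _ => (0 : ℂ) := funext hc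
                rw [this]
                exact hasSum_zero)
            exact hs hz
          obtain ⟨t, ht⟩ := hterm
          obtain ⟨hg0, hr0⟩ := mul_ne_zero_iff.1 ht
          have hXt : X ^ n ≤ t := ih2 t hg0
          obtain ⟨w, hw, hfw⟩ := hRnz hr0
          have hXw : X ≤ w := hXmin w hfw
          calc X ^ (n + 1) = X * X ^ n := pow_succ' X n
            _ ≤ w * t := (hmul2 X (X ^ n) w t hXw hXt).1
            _ = s := hw
    -- norm estimates
    have hnorm : ∀ n : ℕ, ‖f X‖ ^ n ≤ ‖T ^ n‖ := by
      intro n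
      have h1 : ‖((T ^ n) (δ 1)) (X ^ n)‖ ≤ ‖(T ^ n) (δ 1)‖ :=
        lp.norm_apply_le_norm (E := fun _ : S => ℂ) (p := 2) (by norm_num) ((T ^ n) (δ 1)) (X ^ n)
      have hδ1 : ‖δ 1‖ = 1 := by
        simp only [hδ]
        have := lp.norm_single (E := fun _ : S => ℂ) (p := 2) (by norm_num)
          (1 : S) (1 : ℂ)
        rw [this, norm_one]
      have h2 : ‖(T ^ n) (δ 1)‖ ≤ ‖T ^ n‖ := by
        calc ‖(T ^ n) (δ 1)‖ ≤ ‖T ^ n‖ * ‖δ 1‖ := (T ^ n).le_opNorm _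
          _ = ‖T ^ n‖ := by rw [hδ1, mul_one]
      calc ‖f X‖ ^ n = ‖(f X) ^ n‖ := (norm_pow _ _).symm
        _ = ‖((T ^ n) (δ 1)) (X ^ n)‖ := by rw [(key n).1]
        _ ≤ ‖T ^ n‖ := h1.trans h2
    set c : ℝ≥0 := ‖f X‖₊ with hc
    have hc0 : 0 < c := by
      rw [hc]
      exact nnnorm_pos.2 hXmem
    have hcn : ∀ n : ℕ, (c : ℝ≥0∞) ^ n ≤ (‖T ^ n‖₊ : ℝ≥0∞) := by
      intro n
      rw [← ENNReal.coe_pow, ENNReal.coe_le_coe, ← NNReal.coe_le_coe]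
      push_cast
      simpa [hc] using hnorm n
    have hlim := spectrum.pow_nnnorm_pow_one_div_tendsto_nhds_spectralRadius T
    have hge : (c : ℝ≥0∞) ≤ spectralRadius ℂ T := by
      refine ge_of_tendsto hlim ?_
      filter_upwards [Filter.eventually_ge_atTop 1] with n hn
      have hn0 : (n : ℝ) ≠ 0 := Nat.cast_ne_zero.2 (by omega)
      have h1 : (c : ℝ≥0∞) = ((c : ℝ≥0∞) ^ n) ^ (1 / (n : ℝ)) := by
        rw [← ENNReal.rpow_natCast, ← ENNReal.rpow_mul, mul_one_div, div_self hn0,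
          ENNReal.rpow_one]
      rw [h1]
      exact ENNReal.rpow_le_rpow (hcn n) (by positivity)
    exact lt_of_lt_of_le (by exact_mod_cast hc0) hge
  -- PART 2: semisimplicity
  refine ⟨hpos, ?_⟩
  have hjac : sInf {I : Ideal ↥𝔅 | I.IsMaximal} = Ideal.jacobson (⊥ : Ideal ↥𝔅) := by
    unfold Ideal.jacobson
    congr 1
    ext I
    simp
  rw [hjac, eq_bot_iff]
  intro x hx
  rw [Ideal.mem_bot]
  by_contra hx0
  have hspec0 : spectrum ℂ x ⊆ {0} := spectrum_subset_of_mem_jacobson_bot hx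
  have hspec : spectrum ℂ ((x : ↥𝔅) : lp (fun _ : S => ℂ) 2 →L[ℂ] lp (fun _ : S => ℂ) 2)
      ⊆ {0} := fun z hz => hspec0 (AlgHom.spectrum_apply_subset 𝔅.val x hz)
  have hx1 : ((x : ↥𝔅) : lp (fun _ : S => ℂ) 2 →L[ℂ] lp (fun _ : S => ℂ) 2) ∈ 𝔅 := x.2
  have hx2 : ((x : ↥𝔅) : lp (fun _ : S => ℂ) 2 →L[ℂ] lp (fun _ : S => ℂ) 2) ≠ 0 := by
    intro h
    exact hx0 (Subtype.ext h)
  have hrad : spectralRadius ℂ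
      ((x : ↥𝔅) : lp (fun _ : S => ℂ) 2 →L[ℂ] lp (fun _ : S => ℂ) 2) ≤ 0 := by
    unfold spectralRadius
    refine iSup₂_le fun k hk => ?_
    have : k = 0 := hspec hk
    simp [this]
  exact absurd (hpos _ hx1 hx2) (by simpa using hrad)
end

section
/- Let S be a lower stable semigroup with least support element property, and f : S → ℂ finitely supported (or ℓ²) and nonzero with X the ≼-minimal element of the support of f. Then for every n ≥ 1, the n-fold convolution power of f satisfies (f * ⋯ * f)(X^n) = f(X)^n. -/
/-- In a lower stable semigroup (a monoid with a well-founded linear order such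
that products strictly respect the order), if `X` is the `≼`-minimal element of
the support of a nonzero finitely supported `f : S → ℂ`, then the `n`-fold
convolution power of `f` satisfies `(f * ⋯ * f)(Xⁿ) = f(X)ⁿ`.  Convolution is
the multiplication of the monoid algebra. -/
theorem conv_pow_at_min_pow (S : Type*) [Monoid S] [LinearOrder S]
    [WellFoundedLT S]
    (hmul : ∀ us vs : List S, List.Forall₂ (· ≤ ·) us vs →
      us.prod ≤ vs.prod ∧ (us.prod = vs.prod ↔ us = vs))
    (f : MonoidAlgebra ℂ S) (hf : f ≠ 0) (n : ℕ) (hn : 1 ≤ n) :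
    (f ^ n).coeff ((f.coeff.support.min'
        (Finsupp.support_nonempty_iff.mpr (mt MonoidAlgebra.coeff_eq_zero.mp hf))) ^ n) =
      (f.coeff (f.coeff.support.min'
        (Finsupp.support_nonempty_iff.mpr (mt MonoidAlgebra.coeff_eq_zero.mp hf)))) ^ n := by
  set X := f.coeff.support.min' (Finsupp.support_nonempty_iff.mpr (mt MonoidAlgebra.coeff_eq_zero.mp hf)) with hXdef
  have hXmem : f.coeff X ≠ 0 := Finsupp.mem_support_iff.mp
    (Finset.min'_mem _ (Finsupp.support_nonempty_iff.mpr (mt MonoidAlgebra.coeff_eq_zero.mp hf)))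
  have hmin : ∀ y, f.coeff y ≠ 0 → X ≤ y := fun y hy =>
    Finset.min'_le _ _ (Finsupp.mem_support_iff.mpr hy)
  have key : ∀ p a b : S, p ≤ a → X ≤ b →
      p * X ≤ a * b ∧ (a * b = p * X → a = p ∧ b = X) := by
    intro p a b hpa hXb
    have h := hmul [p, X] [a, b]
      (List.Forall₂.cons hpa (List.Forall₂.cons hXb List.Forall₂.nil))
    simp only [List.prod_cons, List.prod_nil, mul_one] at h
    refine ⟨h.1, fun he => ?_⟩
    have h2 := h.2.mp he.symm
    injection h2 with h3 h4
    injection h4 with h5 _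
    exact ⟨h3.symm, h5.symm⟩
  have main : ∀ m, 1 ≤ m →
      ((f ^ m).coeff (X ^ m) = (f.coeff X) ^ m ∧ ∀ y, (f ^ m).coeff y ≠ 0 → X ^ m ≤ y) := by
    intro m hm
    induction m with
    | zero => omega
    | succ m ih =>
      rcases Nat.eq_or_lt_of_le hm with h1 | h1
      · -- m + 1 = 1
        have : m = 0 := by omega
        subst this
        constructor
        · rw [pow_one, pow_one, pow_one]
        · intro y hy
          rw [pow_one] at hy ⊢
          exact hmin y hy
      · have hm1 : 1 ≤ m := by omega
        obtain ⟨ihv, ihs⟩ := ih hm1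
        have hpow : f ^ (m + 1) = f ^ m * f := pow_succ f m
        have hXpow : X ^ (m + 1) = X ^ m * X := pow_succ X m
        constructor
        · rw [hpow, MonoidAlgebra.mul_apply, Finsupp.sum]
          rw [Finset.sum_eq_single_of_mem (X ^ m)
            (Finsupp.mem_support_iff.mpr (by rw [ihv]; exact pow_ne_zero _ hXmem))]
          · rw [Finsupp.sum]
            rw [Finset.sum_eq_single_of_mem X (Finsupp.mem_support_iff.mpr hXmem)]
            · rw [if_pos hXpow.symm, ihv, pow_succ]
            · intro b hb hbX
              rw [if_neg]
              intro hab
              exact hbX ((key (X ^ m) (X ^ m) b le_rfl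
                (hmin b (Finsupp.mem_support_iff.mp hb))).2
                (hab.trans hXpow)).2
          · intro a ha haX
            apply Finset.sum_eq_zero
            intro b hb
            dsimp only
            rw [if_neg]
            intro hab
            exact haX ((key (X ^ m) a b (ihs a (Finsupp.mem_support_iff.mp ha))
              (hmin b (Finsupp.mem_support_iff.mp hb))).2
              (hab.trans hXpow)).1
        · intro y hy
          by_contra hlt
          apply hy
          rw [hpow, MonoidAlgebra.mul_apply, Finsupp.sum]
          apply Finset.sum_eq_zero
          intro a ha
          apply Finset.sum_eq_zero
          intro b hb
          dsimp only
          rw [if_neg]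
          intro hab
          apply hlt
          rw [hXpow]
          calc X ^ m * X ≤ a * b := (key (X ^ m) a b
                (ihs a (Finsupp.mem_support_iff.mp ha))
                (hmin b (Finsupp.mem_support_iff.mp hb))).1
            _ = y := hab
  exact (main n hn).1
end

section
/- In Thompson's semigroup with the index total order, for every X ∈ S with X_0 ∤ X one has X_1 X ≺ X X_2, where ≺ is the total order determined by (ind, ind_0, ind_1, ...). -/
/-- The defining relations of Thompson's semigroup:
`X_j * X_i = X_i * X_{j+1}` for `i < j`. -/
def thompsonRel : FreeMonoid ℕ → FreeMonoid ℕ → Prop := fun a b =>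
  ∃ i j : ℕ, i < j ∧ a = FreeMonoid.of j * FreeMonoid.of i ∧
    b = FreeMonoid.of i * FreeMonoid.of (j + 1)

def thompsonCon : Con (FreeMonoid ℕ) := conGen thompsonRel

/-- Thompson's semigroup (with unit). -/
def ThompsonS : Type := thompsonCon.Quotient

instance : Monoid ThompsonS := inferInstanceAs (Monoid thompsonCon.Quotient)

/-- The generators of Thompson's semigroup. -/
def X (n : ℕ) : ThompsonS := thompsonCon.mk' (FreeMonoid.of n)


/-- The index of an element of Thompson's semigroup: the sum of the exponents in
its unique normal form, equivalently the common length of all words representing it. -/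
noncomputable def ind (x : ThompsonS) : ℕ :=
  sInf {n | ∃ w : FreeMonoid ℕ, thompsonCon.mk' w = x ∧ w.length = n}

/-- `indAt i x` is the exponent of `X_i` in the unique normal form of `x`:
the number of occurrences of the letter `i` in the unique sorted word representing `x`. -/
noncomputable def indAt (i : ℕ) (x : ThompsonS) : ℕ :=
  sInf {n | ∃ w : List ℕ, w.Pairwise (· ≤ ·) ∧
    thompsonCon.mk' (FreeMonoid.ofList w) = x ∧ w.count i = n}

/-- The strict total order `≺` on Thompson's semigroup determined by
`(ind, ind_0, ind_1, ind_2, ...)`. -/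
def tlt (u v : ThompsonS) : Prop :=
  ind u < ind v ∨
    (ind u = ind v ∧ (indAt 0 v < indAt 0 u ∨
      (indAt 0 u = indAt 0 v ∧ ∃ i : ℕ, 1 ≤ i ∧
        (∀ j, j < i → indAt j u = indAt j v) ∧ indAt i v < indAt i u)))

/-- The total order `≼` on Thompson's semigroup. -/
def tle (u v : ThompsonS) : Prop := tlt u v ∨ u = v

/- ============ auxiliary development ============ -/

open FreeMonoid

namespace ThompsonAux

/-- A monoid hom equalizing the defining relations is constant on congruence classes. -/
lemma hom_const {M : Type*} [Monoid M] (f : FreeMonoid ℕ →* M)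
    (hf : ∀ a b, thompsonRel a b → f a = f b) {x y : FreeMonoid ℕ}
    (h : thompsonCon x y) : f x = f y := by
  have hle : thompsonCon ≤ Con.ker f := Con.conGen_le.2 (by intro a b hab; exact hf a b hab)
  exact hle h

/-- Length hom. -/
noncomputable def lenHom : FreeMonoid ℕ →* Multiplicative ℕ :=
  FreeMonoid.lift (fun _ => Multiplicative.ofAdd 1)

/-- Count-of-zeros hom. -/
noncomputable def c0Hom : FreeMonoid ℕ →* Multiplicative ℕ :=
  FreeMonoid.lift (fun n => Multiplicative.ofAdd (if n = 0 then 1 else 0))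

/-- Count-of-ones hom, killed by the presence of a zero. -/
noncomputable def c1Hom : FreeMonoid ℕ →* WithZero (Multiplicative ℕ) :=
  FreeMonoid.lift (fun n => if n = 0 then 0 else
    if n = 1 then ((Multiplicative.ofAdd 1 : Multiplicative ℕ) : WithZero (Multiplicative ℕ))
    else 1)

lemma lenHom_ofList : ∀ l : List ℕ, lenHom (ofList l) = Multiplicative.ofAdd l.length
  | [] => by simp [ofList_nil]
  | a :: t => by
    rw [ofList_cons, map_mul, lenHom_ofList t]
    simp only [lenHom, lift_eval_of, List.length_cons, ← ofAdd_add]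
    congr 1
    omega

lemma c0Hom_ofList : ∀ l : List ℕ, c0Hom (ofList l) = Multiplicative.ofAdd (l.count 0)
  | [] => by simp [ofList_nil]
  | a :: t => by
    rw [ofList_cons, map_mul, c0Hom_ofList t]
    simp only [c0Hom, lift_eval_of, List.count_cons, ← ofAdd_add]
    congr 1
    rcases eq_or_ne a 0 with rfl | ha
    · simp; omega
    · simp [ha, (by simpa using ha : ¬ (a == 0) = true)]

lemma c1Hom_ofList : ∀ l : List ℕ, 0 ∉ l →
    c1Hom (ofList l) = ((Multiplicative.ofAdd (l.count 1) : Multiplicative ℕ) :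
      WithZero (Multiplicative ℕ))
  | [], _ => by simp [ofList_nil]
  | a :: t, h => by
    have ha : a ≠ 0 := fun hh => h (by simp [hh])
    have ht : 0 ∉ t := fun hh => h (List.mem_cons_of_mem _ hh)
    rw [ofList_cons, map_mul, c1Hom_ofList t ht]
    simp only [c1Hom, lift_eval_of, if_neg ha, List.count_cons]
    rcases eq_or_ne a 1 with rfl | ha1
    · rw [if_pos rfl, ← WithZero.coe_mul, ← ofAdd_add]
      norm_num [add_comm]
    · rw [if_neg ha1, one_mul]
      congr 2
      simp [ha1]

lemma c1Hom_zero : ∀ l : List ℕ, 0 ∈ l → c1Hom (ofList l) = 0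
  | [], h => by simp at h
  | a :: t, h => by
    rw [ofList_cons, map_mul]
    rcases eq_or_ne a 0 with rfl | ha
    · simp [c1Hom, lift_eval_of]
    · have ht : 0 ∈ t := by rcases List.mem_cons.1 h with h' | h' <;> [exact absurd h'.symm ha; exact h']
      rw [c1Hom_zero t ht, mul_zero]

lemma len_const {x y : FreeMonoid ℕ} (h : thompsonCon x y) : x.length = y.length := by
  have := hom_const lenHom ?_ h
  · rw [← ofList_toList x, ← ofList_toList y, lenHom_ofList, lenHom_ofList] at this
    exact Multiplicative.ofAdd.injective this
  · rintro a b ⟨i, j, hij, rfl, rfl⟩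
    simp [lenHom, map_mul, lift_eval_of]

lemma count0_const {x y : FreeMonoid ℕ} (h : thompsonCon x y) :
    (toList x).count 0 = (toList y).count 0 := by
  have := hom_const c0Hom ?_ h
  · rw [← ofList_toList x, ← ofList_toList y, c0Hom_ofList, c0Hom_ofList] at this
    simpa using Multiplicative.ofAdd.injective this
  · rintro a b ⟨i, j, hij, rfl, rfl⟩
    have hj : j ≠ 0 := by omega
    simp [c0Hom, map_mul, lift_eval_of, hj, mul_comm]

lemma c1Hom_const {x y : FreeMonoid ℕ} (h : thompsonCon x y) : c1Hom x = c1Hom y := by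
  refine hom_const c1Hom ?_ h
  rintro a b ⟨i, j, hij, rfl, rfl⟩
  rcases eq_or_ne i 0 with rfl | hi
  · simp [c1Hom, map_mul, lift_eval_of]
  · have hj0 : j ≠ 0 := by omega
    have hj1 : j ≠ 1 := by omega
    have hj0' : j + 1 ≠ 0 := by omega
    have hj1' : j + 1 ≠ 1 := by omega
    simp only [c1Hom, map_mul, lift_eval_of, if_neg hj0, if_neg hj1, if_neg hj0',
      if_neg hj1', one_mul, mul_one]

/-- Count of ones is constant among zero-free representatives. -/
lemma count1_const {x y : List ℕ} (h : thompsonCon (ofList x) (ofList y)) (hx : 0 ∉ x) :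
    0 ∉ y ∧ x.count 1 = y.count 1 := by
  have hc := c1Hom_const h
  rw [c1Hom_ofList x hx] at hc
  have hy : 0 ∉ y := by
    intro hy
    rw [c1Hom_zero y hy] at hc
    exact (WithZero.coe_ne_zero hc)
  rw [c1Hom_ofList y hy] at hc
  exact ⟨hy, Multiplicative.ofAdd.injective (WithZero.coe_inj.1 hc)⟩

/-- The defining relation, at the head of a word. -/
lemma con_swap {i j : ℕ} (hij : i < j) (t : List ℕ) :
    thompsonCon (ofList (j :: i :: t)) (ofList (i :: (j + 1) :: t)) := by
  have h1 : thompsonCon (of j * of i) (of i * of (j + 1)) :=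
    ConGen.Rel.of _ _ ⟨i, j, hij, rfl, rfl⟩
  have h2 := h1.mul (thompsonCon.refl (ofList t))
  simp only [ofList_cons, mul_assoc] at h2 ⊢
  exact h2

lemma con_cons (a : ℕ) {t t' : List ℕ} (h : thompsonCon (ofList t) (ofList t')) :
    thompsonCon (ofList (a :: t)) (ofList (a :: t')) := by
  have := (thompsonCon.refl (of a)).mul h
  simp only [ofList_cons] at this ⊢
  exact this

/-- One can insert a letter into a sorted word, staying in the congruence class. -/
lemma insert_sorted : ∀ (t : List ℕ), t.Pairwise (· ≤ ·) → ∀ a : ℕ,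
    ∃ u : List ℕ, u.Pairwise (· ≤ ·) ∧ thompsonCon (ofList (a :: t)) (ofList u) ∧
      ∀ x ∈ u, a ≤ x ∨ ∃ y ∈ t, y ≤ x
  | [], _, a => ⟨[a], by simp, thompsonCon.refl _, by simp⟩
  | b :: s, hs, a => by
    rcases le_or_gt a b with hab | hba
    · refine ⟨a :: b :: s, ?_, thompsonCon.refl _, fun x hx => Or.inl ?_⟩
      · exact List.pairwise_cons.2 ⟨fun y hy => by
          rcases List.mem_cons.1 hy with rfl | hy
          · exact hab
          · exact hab.trans (List.rel_of_pairwise_cons hs hy), hs⟩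
      · rcases List.mem_cons.1 hx with rfl | hx
        · rfl
        · rcases List.mem_cons.1 hx with rfl | hx
          · exact hab
          · exact hab.trans (List.rel_of_pairwise_cons hs hx)
    · obtain ⟨u, hu, hcon, hmem⟩ := insert_sorted s hs.of_cons (a + 1)
      refine ⟨b :: u, ?_, ?_, ?_⟩
      · refine List.pairwise_cons.2 ⟨fun x hx => ?_, hu⟩
        rcases hmem x hx with h1 | ⟨y, hy, hyx⟩
        · omega
        · exact (List.rel_of_pairwise_cons hs hy).trans hyx
      · exact (con_swap hba s).trans (con_cons b hcon)
      · intro x hx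
        rcases List.mem_cons.1 hx with rfl | hx
        · exact Or.inr ⟨x, List.mem_cons_self, le_refl x⟩
        · rcases hmem x hx with h1 | ⟨y, hy, hyx⟩
          · exact Or.inl (by omega)
          · exact Or.inr ⟨y, List.mem_cons_of_mem _ hy, hyx⟩

/-- Every word has a sorted representative. -/
lemma exists_sorted : ∀ w : List ℕ,
    ∃ u : List ℕ, u.Pairwise (· ≤ ·) ∧ thompsonCon (ofList w) (ofList u)
  | [] => ⟨[], by simp, thompsonCon.refl _⟩
  | a :: t => by
    obtain ⟨u, hu, hcon⟩ := exists_sorted t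
    obtain ⟨v, hv, hcon', -⟩ := insert_sorted u hu a
    exact ⟨v, hv, (con_cons a hcon).trans hcon'⟩

/-- A word containing a `0` is congruent to a word starting with `0`. -/
lemma zero_mem_factor : ∀ w : List ℕ, 0 ∈ w →
    ∃ w' : List ℕ, thompsonCon (ofList w) (ofList (0 :: w'))
  | [], h => by simp at h
  | a :: t, h => by
    rcases eq_or_ne a 0 with rfl | ha
    · exact ⟨t, thompsonCon.refl _⟩
    · have ht : 0 ∈ t := by
        rcases List.mem_cons.1 h with h' | h' <;> [exact absurd h'.symm ha; exact h']
      obtain ⟨t', hc⟩ := zero_mem_factor t ht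
      exact ⟨(a + 1) :: t',
        (con_cons a hc).trans (con_swap (Nat.pos_of_ne_zero ha) t')⟩

lemma mk_eq_iff {x y : FreeMonoid ℕ} :
    thompsonCon.mk' x = thompsonCon.mk' y ↔ thompsonCon x y := Con.eq _

/-- `ind` of an element is the length of any representative word. -/
lemma ind_eq (x : ThompsonS) (w : List ℕ) (hw : thompsonCon.mk' (ofList w) = x) :
    ind x = w.length := by
  have hset : {n | ∃ v : FreeMonoid ℕ, thompsonCon.mk' v = x ∧ v.length = n} = {w.length} := by
    ext n
    simp only [Set.mem_setOf_eq, Set.mem_singleton_iff]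
    constructor
    · rintro ⟨v, hv, rfl⟩
      have : thompsonCon v (ofList w) := mk_eq_iff.1 (hv.trans hw.symm)
      have := len_const this
      exact this
    · rintro rfl
      exact ⟨ofList w, hw, rfl⟩
  rw [ind, hset, csInf_singleton]

/-- `indAt 0` of an element is the number of zeros in any representative word. -/
lemma indAt0_eq (x : ThompsonS) (w : List ℕ) (hw : thompsonCon.mk' (ofList w) = x) :
    indAt 0 x = w.count 0 := by
  obtain ⟨u, hu, hcu⟩ := exists_sorted w
  have hcnt : u.count 0 = w.count 0 := by
    have := count0_const hcu
    simpa using this.symm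
  have hset : {n | ∃ v : List ℕ, v.Pairwise (· ≤ ·) ∧
      thompsonCon.mk' (ofList v) = x ∧ v.count 0 = n} = {w.count 0} := by
    ext n
    simp only [Set.mem_setOf_eq, Set.mem_singleton_iff]
    constructor
    · rintro ⟨v, _, hv, rfl⟩
      have : thompsonCon (ofList v) (ofList w) := mk_eq_iff.1 (hv.trans hw.symm)
      have := count0_const this
      simpa using this
    · rintro rfl
      exact ⟨u, hu, by rw [← hw, mk_eq_iff]; exact hcu.symm, hcnt⟩
  rw [indAt, hset, csInf_singleton]

/-- `indAt 1` of an element with a zero-free representative is the number of ones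
in that representative. -/
lemma indAt1_eq (x : ThompsonS) (w : List ℕ) (hw : thompsonCon.mk' (ofList w) = x)
    (h0 : 0 ∉ w) : indAt 1 x = w.count 1 := by
  obtain ⟨u, hu, hcu⟩ := exists_sorted w
  obtain ⟨-, hcnt⟩ := count1_const hcu h0
  have hset : {n | ∃ v : List ℕ, v.Pairwise (· ≤ ·) ∧
      thompsonCon.mk' (ofList v) = x ∧ v.count 1 = n} = {w.count 1} := by
    ext n
    simp only [Set.mem_setOf_eq, Set.mem_singleton_iff]
    constructor
    · rintro ⟨v, _, hv, rfl⟩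
      have : thompsonCon (ofList w) (ofList v) := mk_eq_iff.1 (hw.trans hv.symm)
      exact (count1_const this h0).2.symm
    · rintro rfl
      exact ⟨u, hu, by rw [← hw, mk_eq_iff]; exact hcu.symm, hcnt.symm⟩
  rw [indAt, hset, csInf_singleton]

end ThompsonAux

open ThompsonAux

/-- In Thompson's semigroup, if `X_0 ∤ X` then `X_1 X ≺ X X_2` in the total
order determined by `(ind, ind_0, ind_1, ...)`. -/
theorem thompson_X1_mul_lt (Y : ThompsonS) (h : ¬ X 0 ∣ Y) :
    tlt (X 1 * Y) (Y * X 2) := by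
  obtain ⟨w0, hw0⟩ := thompsonCon.mk'_surjective Y
  have hw : thompsonCon.mk' (ofList (toList w0)) = Y := by rw [ofList_toList]; exact hw0
  set w : List ℕ := toList w0 with hwdef
  -- `w` contains no zero
  have h0 : 0 ∉ w := by
    intro hmem
    obtain ⟨w', hc⟩ := zero_mem_factor w hmem
    refine h ⟨thompsonCon.mk' (ofList w'), ?_⟩
    rw [← hw, mk_eq_iff.2 hc]
    show thompsonCon.mk' (ofList (0 :: w')) = _
    rw [ofList_cons, map_mul]
    rfl
  -- representatives of the two sides
  have hL : thompsonCon.mk' (ofList (1 :: w)) = X 1 * Y := by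
    rw [ofList_cons, map_mul, hw]; rfl
  have hR : thompsonCon.mk' (ofList (w ++ [2])) = Y * X 2 := by
    rw [ofList_append, map_mul, hw, ofList_singleton]; rfl
  have h0L : (0 : ℕ) ∉ (1 :: w) := by
    intro hx; rcases List.mem_cons.1 hx with hx | hx
    · exact absurd hx (by norm_num)
    · exact h0 hx
  have h0R : (0 : ℕ) ∉ (w ++ [2]) := by
    intro hx; rcases List.mem_append.1 hx with hx | hx
    · exact h0 hx
    · simp at hx
  -- ind
  have hindL := ind_eq _ _ hL
  have hindR := ind_eq _ _ hR
  have hind : ind (X 1 * Y) = ind (Y * X 2) := by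
    rw [hindL, hindR]; simp
  -- indAt 0
  have h0L' := indAt0_eq _ _ hL
  have h0R' := indAt0_eq _ _ hR
  have hAt0 : indAt 0 (X 1 * Y) = indAt 0 (Y * X 2) := by
    rw [h0L', h0R']
    simp [List.count_cons, List.count_append]
  -- indAt 1
  have h1L := indAt1_eq _ _ hL h0L
  have h1R := indAt1_eq _ _ hR h0R
  have hAt1 : indAt 1 (Y * X 2) < indAt 1 (X 1 * Y) := by
    rw [h1L, h1R]
    simp [List.count_cons, List.count_append]
  exact Or.inr ⟨hind, Or.inr ⟨hAt0, 1, le_refl 1,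
    fun j hj => by interval_cases j; exact hAt0, hAt1⟩⟩
end
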